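/- arXiv:1201.1877 — 6 statements merged into one kernel-verified Lean document; each statement's English description precedes it below -/
import Mathlib

section
/- Let H be a complex Hilbert space, L ⊆ H a closed Lagrangian real-linear subspace, η₀ ∈ H, and D : H → ℝ a continuous real-linear functional with D(ξ) = 2·ω(ξ,η₀) for all ξ ∈ L. Then for every η ∈ η₀ + L and every ξ ∈ H one has ρ^{D,η₀}(η + ξ) = ρ(ξ) · exp( (i/2)·D(η) + i·ω(ξ,η) ). -/
/-- Lemma 4.1 of the paper.  Let `H` be a complex Hilbert space,
`L ⊆ H` a closed Lagrangian real-linear subspace, `η₀ ∈ H`, and `D : H → ℝ` a continuous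
real-linear functional with `D(ξ) = 2·ω(ξ,η₀)` for all `ξ ∈ L`.  Then for every
`η ∈ η₀ + L` and every `ξ ∈ H`,
`ρ^{D,η₀}(η + ξ) = ρ(ξ) · exp((i/2)·D(η) + i·ω(ξ,η))`.
Here `ρ^{D,η₀}(τ) = exp((i/2)·D(τ^R) − (i/2)·g(τ^R,τ^I) − (1/2)·g(τ^I,τ^I))` for the
decomposition `τ = τ^R + J τ^I` with `τ^R ∈ η₀ + L`, `τ^I ∈ L`, and
`ρ(ξ) = exp(−(i/2)·g(a,b) − (1/2)·g(b,b))` for `ξ = a + J b` with `a, b ∈ L`. -/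
theorem stmt_2
    {H : Type*} [NormedAddCommGroup H] [InnerProductSpace ℂ H] [CompleteSpace H]
    (L : Submodule ℝ H) (hClosed : IsClosed (L : Set H))
    (hLag : (L : Set H) = {x : H | ∀ ξ' ∈ L, (1/2 : ℝ) * (inner ℂ x ξ' : ℂ).im = 0})
    (η₀ : H) (D : H →L[ℝ] ℝ)
    (hD : ∀ ξ' ∈ L, D ξ' = 2 * ((1/2 : ℝ) * (inner ℂ ξ' η₀ : ℂ).im))
    (η ξ : H) (hη : ∃ l ∈ L, η = η₀ + l)
    (τR τI a b : H)
    (hτR : ∃ l ∈ L, τR = η₀ + l) (hτI : τI ∈ L)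
    (hdec : η + ξ = τR + Complex.I • τI)
    (ha : a ∈ L) (hb : b ∈ L) (hdec' : ξ = a + Complex.I • b) :
    Complex.exp ((Complex.I / 2) * (D τR : ℂ)
        - (Complex.I / 2) * ((inner ℂ τR τI : ℂ).re : ℂ)
        - (1/2 : ℂ) * ((inner ℂ τI τI : ℂ).re : ℂ)) =
      Complex.exp (-(Complex.I / 2) * ((inner ℂ a b : ℂ).re : ℂ)
          - (1/2 : ℂ) * ((inner ℂ b b : ℂ).re : ℂ)) *
        Complex.exp ((Complex.I / 2) * (D η : ℂ)
          + Complex.I * (((1/2 : ℝ) * (inner ℂ ξ η : ℂ).im : ℝ) : ℂ)) := by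
  -- Lagrangian ⇒ Im⟨x,y⟩ = 0 for x,y ∈ L
  have hL0 : ∀ x ∈ L, ∀ y ∈ L, (inner ℂ x y : ℂ).im = 0 := by
    intro x hx y hy
    have hx' : x ∈ {x : H | ∀ ξ' ∈ L, (1/2 : ℝ) * (inner ℂ x ξ' : ℂ).im = 0} := by
      rw [← hLag]; exact hx
    have := hx' y hy
    linarith
  obtain ⟨l, hl, hηl⟩ := hη
  obtain ⟨l', hl', hτRl⟩ := hτR
  -- show τI = b
  set y := b - τI with hy
  have hyL : y ∈ L := L.sub_mem hb hτI
  have hIy : Complex.I • y ∈ L := by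
    have hx : τR - η - a = Complex.I • y := by
      have hkey : η + (a + Complex.I • b) = τR + Complex.I • τI := by rw [← hdec']; exact hdec
      rw [hy, smul_sub]
      linear_combination (norm := module) -hkey
    rw [← hx]
    have : τR - η - a = (l' - l - a : H) := by rw [hτRl, hηl]; abel
    rw [this]
    exact L.sub_mem (L.sub_mem hl' hl) ha
  have hy0 : y = 0 := by
    have h1 := hL0 _ hIy _ hyL
    rw [inner_smul_left] at h1
    simp only [Complex.conj_I, neg_mul, Complex.neg_im, Complex.mul_im, Complex.I_re,
      Complex.I_im, zero_mul, one_mul, zero_add, neg_eq_zero] at h1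
    have : (inner ℂ y y : ℂ) = 0 := by
      have him : (inner ℂ y y : ℂ).im = 0 := inner_self_im (𝕜 := ℂ) y
      exact Complex.ext (by simpa using h1) him
    exact inner_self_eq_zero.mp this
  have hτIb : τI = b := by
    have := sub_eq_zero.mp (by rw [← hy]; exact hy0)
    exact this.symm
  have hτRval : τR = η + a := by
    have : η + (a + Complex.I • b) = τR + Complex.I • τI := by rw [← hdec']; exact hdec
    rw [hτIb] at this
    have := congrArg (fun z => z - Complex.I • b) this
    simp at this
    linear_combination (norm := module) this.symm
  -- key real identities
  have hDa : D a = (inner ℂ a η : ℂ).im := by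
    have h1 := hD a ha
    have h2 : (inner ℂ a η : ℂ) = inner ℂ a η₀ + inner ℂ a l := by rw [hηl, inner_add_right]
    have h3 := hL0 a ha l hl
    rw [h2]
    simp [Complex.add_im, h3]
    linarith
  have hre : (inner ℂ η b : ℂ).re = (inner ℂ b η : ℂ).re := by
    rw [← inner_conj_symm b η]; exact Complex.conj_re _
  have him : (inner ℂ ξ η : ℂ).im = (inner ℂ a η : ℂ).im - (inner ℂ b η : ℂ).re := by
    rw [hdec', inner_add_left, inner_smul_left]
    simp [Complex.add_im, Complex.conj_I]
    ring
  rw [← Complex.exp_add]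
  congr 1
  rw [hτRval, hτIb, map_add, inner_add_left]
  push_cast
  rw [Complex.add_re]
  push_cast
  rw [him]
  push_cast
  rw [hDa, hre]
  push_cast
  ring
end

section
/- Let H be a complex Hilbert space, L ⊆ H a closed Lagrangian real-linear subspace, η₀ ∈ H, and D : H → ℝ a continuous real-linear functional with D(ξ) = 2·ω(ξ,η₀) for all ξ ∈ L. For τ ∈ H write τ = τ^R + J τ^I with τ^R, τ^I ∈ L. Then ρ^{D,η₀}(τ) = ρ(τ) · exp( i·D(τ^R) + D(τ^I) ) · ρ^{D,η₀}(0). (Here exp(i·D(τ^R) + D(τ^I)) equals F(τ̂), the complex-linear extension of the Weyl observable F = exp(i D) evaluated at τ̂ := τ^R − i·τ^I.) -/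
/-- factorization identity, Proposition 4.2(i) of the paper.
With `H`, `L`, `η₀`, `D` as before, write `τ = a + J b` with `a, b ∈ L` (so
`F(τ̂) = exp(i·D(a) + D(b))` for `τ̂ = a − i·b`), write `τ = τR + J τI` with
`τR ∈ η₀ + L`, `τI ∈ L`, and write `0 = z + J w` with `z ∈ η₀ + L`, `w ∈ L`.  Then
`ρ^{D,η₀}(τ) = ρ(τ) · exp(i·D(a) + D(b)) · ρ^{D,η₀}(0)`. -/
theorem stmt_3
    {H : Type*} [NormedAddCommGroup H] [InnerProductSpace ℂ H] [CompleteSpace H]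
    (L : Submodule ℝ H) (hClosed : IsClosed (L : Set H))
    (hLag : (L : Set H) = {x : H | ∀ ξ ∈ L, (1/2 : ℝ) * (inner ℂ x ξ : ℂ).im = 0})
    (η₀ : H) (D : H →L[ℝ] ℝ)
    (hD : ∀ ξ ∈ L, D ξ = 2 * ((1/2 : ℝ) * (inner ℂ ξ η₀ : ℂ).im))
    (τ a b τR τI z w : H)
    (ha : a ∈ L) (hb : b ∈ L) (hab : τ = a + Complex.I • b)
    (hτR : ∃ l ∈ L, τR = η₀ + l) (hτI : τI ∈ L) (hτdec : τ = τR + Complex.I • τI)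
    (hz : ∃ l ∈ L, z = η₀ + l) (hw : w ∈ L) (h0dec : (0 : H) = z + Complex.I • w) :
    Complex.exp ((Complex.I / 2) * (D τR : ℂ)
        - (Complex.I / 2) * ((inner ℂ τR τI : ℂ).re : ℂ)
        - (1/2 : ℂ) * ((inner ℂ τI τI : ℂ).re : ℂ)) =
      Complex.exp (-(Complex.I / 2) * ((inner ℂ a b : ℂ).re : ℂ)
          - (1/2 : ℂ) * ((inner ℂ b b : ℂ).re : ℂ)) *
        Complex.exp (Complex.I * (D a : ℂ) + (D b : ℂ)) *
        Complex.exp ((Complex.I / 2) * (D z : ℂ)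
          - (Complex.I / 2) * ((inner ℂ z w : ℂ).re : ℂ)
          - (1/2 : ℂ) * ((inner ℂ w w : ℂ).re : ℂ)) := by
  obtain ⟨m, hm, hzm⟩ := hz
  obtain ⟨l, hl, hlR⟩ := hτR
  -- Im of inner products of elements of L vanishes
  have hIm : ∀ x ∈ L, ∀ y ∈ L, (inner ℂ x y : ℂ).im = 0 := by
    intro x hx y hy
    have hx' : x ∈ {x : H | ∀ ξ ∈ L, (1/2 : ℝ) * (inner ℂ x ξ : ℂ).im = 0} := by
      rw [← hLag]; exact hx
    have := hx' y hy
    linarith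
  have hzw : z = -(Complex.I • w) := eq_neg_of_add_eq_zero_left h0dec.symm
  have hη : η₀ = -(Complex.I • w) - m := by
    have : η₀ = z - m := by rw [hzm]; abel
    rw [this, hzw]
  -- key decomposition identity
  have key : a + Complex.I • b = (l - m - Complex.I • w) + Complex.I • τI := by
    rw [← hab, hτdec, hlR, hη]; abel
  have hpq : (a - (l - m)) + Complex.I • (b - (τI - w)) = 0 := by
    have h2 : (a - (l - m)) + Complex.I • (b - (τI - w)) =
        (a + Complex.I • b) - ((l - m - Complex.I • w) + Complex.I • τI) := by
      rw [smul_sub, smul_sub]; abel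
    rw [h2, key, sub_self]
  -- uniqueness of decomposition: both components vanish
  have hpL : a - (l - m) ∈ L := sub_mem ha (sub_mem hl hm)
  have hqL : b - (τI - w) ∈ L := sub_mem hb (sub_mem hτI hw)
  set p := a - (l - m) with hp
  set q := b - (τI - w) with hq
  have hip : (inner ℂ p p : ℂ) + Complex.I * (inner ℂ p q : ℂ) = 0 := by
    have h1 : (inner ℂ p (p + Complex.I • q) : ℂ) = 0 := by rw [hpq, inner_zero_right]
    rwa [inner_add_right, inner_smul_right] at h1
  have hp0 : p = 0 := by
    have hre : (inner ℂ p p : ℂ).re + (Complex.I * (inner ℂ p q : ℂ)).re = 0 := by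
      have := congrArg Complex.re hip
      simpa using this
    have him : (inner ℂ p q : ℂ).im = 0 := hIm p hpL q hqL
    have : (inner ℂ p p : ℂ).re = 0 := by
      rw [Complex.mul_re] at hre
      simp [him, -inner_self_eq_norm_sq_to_K] at hre
      exact hre
    have hnorm : ‖p‖ ^ 2 = 0 := by
      rw [← this]
      simp [← inner_self_eq_norm_sq (𝕜 := ℂ) p]
    simpa using pow_eq_zero_iff (n := 2) (by norm_num) |>.mp hnorm
  have hq0 : q = 0 := by
    have : Complex.I • q = 0 := by
      have := hpq
      rw [hp0, zero_add] at this
      exact this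
    have := smul_eq_zero.mp this
    rcases this with h | h
    · exact absurd h Complex.I_ne_zero
    · exact h
  have haL : a = l - m := sub_eq_zero.mp hp0
  have hbq : b = τI - w := sub_eq_zero.mp hq0
  have hτRa : τR = a - Complex.I • w := by rw [hlR, hη, haL]; abel
  have hτIb : τI = b + w := by rw [hbq]; abel
  -- inner product computations
  have e1 : (inner ℂ τR τI : ℂ).re = (inner ℂ a b : ℂ).re + (inner ℂ a w : ℂ).re := by
    rw [hτRa, hτIb]
    simp [inner_sub_left, inner_add_right, inner_smul_left, Complex.mul_re,
      hIm w hw b hb, hIm w hw w hw, -inner_self_eq_norm_sq_to_K]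
  have e2 : (inner ℂ τI τI : ℂ).re =
      (inner ℂ b b : ℂ).re + 2 * (inner ℂ b w : ℂ).re + (inner ℂ w w : ℂ).re := by
    rw [hτIb]
    have hsymm : (inner ℂ w b : ℂ).re = (inner ℂ b w : ℂ).re := by
      rw [← inner_conj_symm b w]
      exact (Complex.conj_re _).symm
    simp [inner_add_left, inner_add_right, hsymm, -inner_self_eq_norm_sq_to_K]
    ring
  have e3 : D τR = D a - D (Complex.I • w) := by rw [hτRa]; exact map_sub D a _
  have e4 : D z = -(D (Complex.I • w)) := by rw [hzw]; exact map_neg D _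
  have e5 : (inner ℂ z w : ℂ).re = 0 := by
    rw [hzw]
    simp [inner_smul_left, Complex.mul_re, hIm w hw w hw, -inner_self_eq_norm_sq_to_K]
  have e6 : D a = -(inner ℂ a w : ℂ).re := by
    have := hD a ha
    rw [hη] at this
    rw [this]
    simp [inner_sub_right, inner_smul_right, Complex.mul_im, hIm a ha m hm]
  have e7 : D b = -(inner ℂ b w : ℂ).re := by
    have := hD b hb
    rw [hη] at this
    rw [this]
    simp [inner_sub_right, inner_smul_right, Complex.mul_im, hIm b hb m hm]
  rw [← Complex.exp_add, ← Complex.exp_add]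
  congr 1
  rw [e3, e4, e1, e2, e5, e6, e7]
  push_cast
  ring
end

section
/- Let H be a complex Hilbert space, L ⊆ H a closed Lagrangian real-linear subspace, η₀ ∈ H, and D : H → ℝ a continuous real-linear functional with D(ξ) = 2·ω(ξ,η₀) for all ξ ∈ L. Then the intersection (η₀ + L) ∩ J L contains exactly one element η_D, and the vacuum value of the quantized Weyl observable is ρ^{D,η₀}(0) = exp( (i/2)·D(η_D) − (1/2)·g(η_D, η_D) ). -/
open Complex

/-- vacuum value of a quantized Weyl observable, Proposition 4.2(ii).
With `H`, `L`, `η₀`, `D` as before, the intersection `(η₀ + L) ∩ J L` contains exactly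
one element `η_D`, and for the decomposition `0 = z + J w` with `z ∈ η₀ + L`, `w ∈ L`,
`ρ^{D,η₀}(0) = exp((i/2)·D(η_D) − (1/2)·g(η_D,η_D))`. -/
theorem stmt_4
    {H : Type*} [NormedAddCommGroup H] [InnerProductSpace ℂ H] [CompleteSpace H]
    (L : Submodule ℝ H) (hClosed : IsClosed (L : Set H))
    (hLag : (L : Set H) = {x : H | ∀ ξ ∈ L, (1/2 : ℝ) * (inner ℂ x ξ : ℂ).im = 0})
    (η₀ : H) (D : H →L[ℝ] ℝ)
    (hD : ∀ ξ ∈ L, D ξ = 2 * ((1/2 : ℝ) * (inner ℂ ξ η₀ : ℂ).im)) :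
    (∃! ηD : H, (∃ l ∈ L, ηD = η₀ + l) ∧ (∃ x ∈ L, ηD = Complex.I • x)) ∧
    (∀ ηD : H, (∃ l ∈ L, ηD = η₀ + l) → (∃ x ∈ L, ηD = Complex.I • x) →
      ∀ z w : H, (∃ l ∈ L, z = η₀ + l) → w ∈ L → (0 : H) = z + Complex.I • w →
        Complex.exp ((Complex.I / 2) * (D z : ℂ)
            - (Complex.I / 2) * ((inner ℂ z w : ℂ).re : ℂ)
            - (1/2 : ℂ) * ((inner ℂ w w : ℂ).re : ℂ)) =
          Complex.exp ((Complex.I / 2) * (D ηD : ℂ)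
            - (1/2 : ℂ) * ((inner ℂ ηD ηD : ℂ).re : ℂ))) := by
  letI : InnerProductSpace ℝ H := InnerProductSpace.complexToReal
  haveI : CompleteSpace L := hClosed.completeSpace_coe
  -- membership characterization
  have hmemL : ∀ x : H, x ∈ L ↔ ∀ ξ ∈ L, (inner ℂ x ξ : ℂ).im = 0 := by
    intro x
    have h := Set.ext_iff.mp hLag x
    simp only [Set.mem_setOf_eq, SetLike.mem_coe] at h
    rw [h]
    constructor
    · intro h' ξ hξ
      have := h' ξ hξ
      linarith
    · intro h' ξ hξ
      rw [h' ξ hξ]; ring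
  -- real inner product is the real part of the complex one
  have hri : ∀ x y : H, (inner ℝ x y : ℝ) = (inner ℂ x y : ℂ).re := fun x y => rfl
  -- I • L ⊆ Lᗮ
  have hJL : ∀ y : H, y ∈ L → Complex.I • y ∈ Lᗮ := by
    intro y hy
    rw [Submodule.mem_orthogonal]
    intro u hu
    have h1 : (inner ℂ y u : ℂ).im = 0 := (hmemL y).1 hy u hu
    have : (inner ℂ u (Complex.I • y) : ℂ) = Complex.I * (inner ℂ u y : ℂ) :=
      inner_smul_right _ _ _
    rw [hri, this]
    have h2 : (inner ℂ u y : ℂ).im = - (inner ℂ y u : ℂ).im := by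
      rw [← inner_conj_symm u y]; exact Complex.conj_im _
    simp [Complex.mul_re, h2, h1]
  -- Lᗮ ⊆ I • L
  have hLperp : ∀ x : H, x ∈ Lᗮ → ∃ y ∈ L, x = Complex.I • y := by
    intro x hx
    refine ⟨(-Complex.I) • x, ?_, by simp [smul_smul]⟩
    rw [hmemL]
    intro ξ hξ
    have h0 : (inner ℝ ξ x : ℝ) = 0 := (Submodule.mem_orthogonal L x).1 hx ξ hξ
    rw [hri] at h0
    have hs : (inner ℂ ((-Complex.I) • x) ξ : ℂ) = Complex.I * (inner ℂ x ξ : ℂ) := by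
      rw [inner_smul_left]; simp
    rw [hs]
    have h2 : (inner ℂ x ξ : ℂ).re = (inner ℂ ξ x : ℂ).re := by
      rw [← inner_conj_symm x ξ]; exact Complex.conj_re _
    simp [Complex.mul_im, h2, h0]
  constructor
  · -- existence and uniqueness of ηD
    obtain ⟨a, ha, c, hc, hdec⟩ := Submodule.exists_add_mem_mem_orthogonal (K := L) η₀
    obtain ⟨b, hb, hcb⟩ := hLperp c hc
    refine ⟨c, ⟨⟨-a, neg_mem ha, by rw [hdec]; abel⟩, ⟨b, hb, hcb⟩⟩, ?_⟩
    rintro η ⟨⟨l, hl, rfl⟩, ⟨x, hx, hex⟩⟩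
    have hdiff : η₀ + l - c ∈ L := by
      have : η₀ + l - c = a + l := by rw [hdec]; abel
      rw [this]; exact add_mem ha hl
    have hdiff' : η₀ + l - c ∈ Lᗮ := by
      have : η₀ + l - c = Complex.I • (x - b) := by
        rw [smul_sub, ← hex, ← hcb]
      rw [this]; exact hJL _ (sub_mem hx hb)
    have : η₀ + l - c = 0 := by
      have h0 : (inner ℝ (η₀ + l - c) (η₀ + l - c) : ℝ) = 0 :=
        (Submodule.mem_orthogonal L _).1 hdiff' _ hdiff
      exact inner_self_eq_zero.mp h0
    linear_combination (norm := module) this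
  · -- vacuum value
    rintro ηD ⟨l', hl', rfl⟩ ⟨x, hx, hex⟩ z w ⟨l, hl, rfl⟩ hw hzw
    -- z = ηD and w = I • z
    have hz : η₀ + l = -(Complex.I • w) := eq_neg_of_add_eq_zero_left hzw.symm
    have hdiff : (η₀ + l') - (η₀ + l) ∈ L := by
      have : (η₀ + l') - (η₀ + l) = l' - l := by abel
      rw [this]; exact sub_mem hl' hl
    have hdiff' : (η₀ + l') - (η₀ + l) ∈ Lᗮ := by
      have : (η₀ + l') - (η₀ + l) = Complex.I • (x + w) := by
        rw [smul_add, ← hex, hz]; abel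
      rw [this]; exact hJL _ (add_mem hx hw)
    have hze : η₀ + l = η₀ + l' := by
      have h0 : (inner ℝ ((η₀ + l') - (η₀ + l)) ((η₀ + l') - (η₀ + l)) : ℝ) = 0 :=
        (Submodule.mem_orthogonal L _).1 hdiff' _ hdiff
      have h1 := inner_self_eq_zero.mp h0
      exact (sub_eq_zero.mp h1).symm
    have hwz : w = Complex.I • (η₀ + l) := by
      have : Complex.I • (η₀ + l) = Complex.I • (-(Complex.I • w)) := by rw [hz]
      rw [this, smul_neg, smul_smul]
      simp
    rw [← hze]
    congr 1
    set v := η₀ + l with hv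
    have h1 : (inner ℂ v w : ℂ) = Complex.I * (inner ℂ v v : ℂ) := by
      rw [hwz, inner_smul_right]
    have h2 : (inner ℂ w w : ℂ) = (inner ℂ v v : ℂ) := by
      rw [hwz, inner_smul_left, inner_smul_right]
      simp [← mul_assoc, Complex.conj_I]
    have h3 : (inner ℂ v v : ℂ).im = 0 := by
      have hc := congrArg Complex.im (inner_conj_symm v v)
      simp only [Complex.conj_im] at hc
      linarith
    rw [h1, h2]
    have : (Complex.I * (inner ℂ v v : ℂ)).re = 0 := by
      rw [Complex.mul_re, h3]; simp
    rw [this]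
    push_cast
    ring
end

section
/- Let H be a complex Hilbert space and L ⊆ H a closed Lagrangian real-linear subspace. Let n ∈ ℕ, λ₁,…,λ_n ∈ ℂ, and for each k let D_k : H → ℝ be a continuous real-linear functional and η_k ∈ H a point with D_k(ξ) = 2·ω(ξ,η_k) for all ξ ∈ L. Fix τ ∈ H and write τ = τ^R + J τ^I with τ^R, τ^I ∈ L. Then the quantization of F = Σ_k λ_k·exp(i D_k) satisfies the coherent factorization property: Σ_{k=1}^n λ_k · ρ^{D_k,η_k}(τ) = ρ(τ) · Σ_{k=1}^n λ_k · exp( i·D_k(τ^R) + D_k(τ^I) ) · ρ^{D_k,η_k}(0). (The right-hand sum is the quantization of the shifted observable F'(ξ) := F(ξ + τ̂), τ̂ := τ^R − i·τ^I, evaluated on the vacuum.) -/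
/-- coherent factorization property, Proposition 4.3 of the paper.
Let `H` be a complex Hilbert space and `L ⊆ H` a closed Lagrangian real-linear subspace.
Let `λ₁,…,λ_n ∈ ℂ` and, for each `k`, let `D_k : H → ℝ` be a continuous real-linear
functional and `η_k ∈ H` with `D_k(ξ) = 2·ω(ξ,η_k)` for all `ξ ∈ L`.  Fix `τ ∈ H` and
write `τ = a + J b` with `a, b ∈ L`; for each `k` write `τ = r k + J (s k)` with
`r k ∈ η_k + L`, `s k ∈ L`, and `0 = z k + J (w k)` with `z k ∈ η_k + L`, `w k ∈ L`.
Then the quantization of `F = Σ_k λ_k·exp(i·D_k)` satisfies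
`Σ_k λ_k·ρ^{D_k,η_k}(τ) = ρ(τ) · Σ_k λ_k·exp(i·D_k(a) + D_k(b))·ρ^{D_k,η_k}(0)`. -/
theorem stmt_6
    {H : Type*} [NormedAddCommGroup H] [InnerProductSpace ℂ H] [CompleteSpace H]
    (L : Submodule ℝ H) (hClosed : IsClosed (L : Set H))
    (hLag : (L : Set H) = {x : H | ∀ ξ ∈ L, (1/2 : ℝ) * (inner ℂ x ξ : ℂ).im = 0})
    (n : ℕ) (lam : Fin n → ℂ) (D : Fin n → (H →L[ℝ] ℝ)) (η : Fin n → H)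
    (hD : ∀ k, ∀ ξ ∈ L, D k ξ = 2 * ((1/2 : ℝ) * (inner ℂ ξ (η k) : ℂ).im))
    (τ a b : H) (ha : a ∈ L) (hb : b ∈ L) (hab : τ = a + Complex.I • b)
    (r s z w : Fin n → H)
    (hr : ∀ k, ∃ l ∈ L, r k = η k + l) (hs : ∀ k, s k ∈ L)
    (hτdec : ∀ k, τ = r k + Complex.I • s k)
    (hz : ∀ k, ∃ l ∈ L, z k = η k + l) (hw : ∀ k, w k ∈ L)
    (h0dec : ∀ k, (0 : H) = z k + Complex.I • w k) :
    ∑ k : Fin n, lam k *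
        Complex.exp ((Complex.I / 2) * (D k (r k) : ℂ)
          - (Complex.I / 2) * ((inner ℂ (r k) (s k) : ℂ).re : ℂ)
          - (1/2 : ℂ) * ((inner ℂ (s k) (s k) : ℂ).re : ℂ)) =
      Complex.exp (-(Complex.I / 2) * ((inner ℂ a b : ℂ).re : ℂ)
          - (1/2 : ℂ) * ((inner ℂ b b : ℂ).re : ℂ)) *
        ∑ k : Fin n, lam k *
          Complex.exp (Complex.I * (D k a : ℂ) + (D k b : ℂ)) *
          Complex.exp ((Complex.I / 2) * (D k (z k) : ℂ)
            - (Complex.I / 2) * ((inner ℂ (z k) (w k) : ℂ).re : ℂ)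
            - (1/2 : ℂ) * ((inner ℂ (w k) (w k) : ℂ).re : ℂ)) := by
  -- Lagrangian facts
  have him : ∀ x ∈ L, ∀ ξ ∈ L, (inner ℂ x ξ : ℂ).im = 0 := by
    intro x hx ξ hξ
    have hx' : x ∈ {x : H | ∀ ξ ∈ L, (1/2 : ℝ) * (inner ℂ x ξ : ℂ).im = 0} := by
      rw [← hLag]; exact hx
    have := hx' ξ hξ
    linarith
  have key : ∀ x ∈ L, ∀ y ∈ L, x = Complex.I • y → x = 0 ∧ y = 0 := by
    intro x hx y hy hxy
    have h1 : (inner ℂ x y : ℂ).im = 0 := him x hx y hy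
    rw [hxy, inner_smul_left] at h1
    have hself : (inner ℂ y y : ℂ).im = 0 := by rw [← RCLike.im_to_complex]; exact inner_self_im y
    have hre : (inner ℂ y y : ℂ).re = 0 := by
      simp [Complex.mul_im, Complex.conj_I, hself] at h1
      simpa using h1
    have hy0 : y = 0 := by
      have : (inner ℂ y y : ℂ) = 0 := Complex.ext hre hself
      exact inner_self_eq_zero.mp this
    refine ⟨?_, hy0⟩
    rw [hxy, hy0, smul_zero]
  rw [Finset.mul_sum]
  refine Finset.sum_congr rfl (fun k _ => ?_)
  obtain ⟨l, hl, hrl⟩ := hr k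
  obtain ⟨m, hm, hzm⟩ := hz k
  have hzk : z k = -(Complex.I • w k) := eq_neg_of_add_eq_zero_left (h0dec k).symm
  have hηk : η k = -(Complex.I • w k) - m := by rw [← hzk]; exact eq_sub_of_add_eq hzm.symm
  have hmain : a + Complex.I • b = r k + Complex.I • s k := by rw [← hab]; exact hτdec k
  have h6 : a - l + m = Complex.I • (s k - w k - b) := by
    rw [hrl, hηk] at hmain
    rw [smul_sub, smul_sub]
    linear_combination (norm := module) hmain
  obtain ⟨hx0, hy0⟩ := key _ (add_mem (sub_mem ha hl) hm) _
    (sub_mem (sub_mem (hs k) (hw k)) hb) h6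
  have hsk : s k = b + w k := by
    linear_combination (norm := module) hy0
  have hrk : r k = a + z k := by
    rw [hrl, hηk, hzk]
    have hlm : l - m = a := by linear_combination (norm := module) -hx0
    linear_combination (norm := module) hlm
  -- inner product computations
  have himww : (inner ℂ (w k) (w k) : ℂ).im = 0 := by rw [← RCLike.im_to_complex]; exact inner_self_im (w k)
  have himwb : (inner ℂ (w k) b : ℂ).im = 0 := him _ (hw k) _ hb
  have himbw : (inner ℂ b (w k) : ℂ).im = 0 := him _ hb _ (hw k)
  have himam : (inner ℂ a m : ℂ).im = 0 := him _ ha _ hm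
  have himbm : (inner ℂ b m : ℂ).im = 0 := him _ hb _ hm
  have hrewb : (inner ℂ (w k) b : ℂ).re = (inner ℂ b (w k) : ℂ).re := by rw [← RCLike.re_to_complex, ← RCLike.re_to_complex]; exact inner_re_symm (w k) b
  have h1 : (inner ℂ (r k) (s k) : ℂ).re = (inner ℂ a b : ℂ).re + (inner ℂ a (w k) : ℂ).re := by
    rw [hrk, hzk, hsk]
    simp [inner_add_left, inner_add_right, inner_neg_left, inner_smul_left, Complex.conj_I,
      Complex.add_re, Complex.neg_re, Complex.mul_re, Complex.I_re, Complex.I_im,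
      himww, himwb, -inner_self_eq_norm_sq_to_K]
  have h2 : (inner ℂ (s k) (s k) : ℂ).re
      = (inner ℂ b b : ℂ).re + 2 * (inner ℂ b (w k) : ℂ).re + (inner ℂ (w k) (w k) : ℂ).re := by
    rw [hsk]
    simp [inner_add_left, inner_add_right, Complex.add_re, hrewb, -inner_self_eq_norm_sq_to_K]
    ring
  have h3 : (inner ℂ (z k) (w k) : ℂ).re = 0 := by
    rw [hzk]
    simp [inner_neg_left, inner_smul_left, Complex.conj_I, Complex.neg_re, Complex.mul_re,
      Complex.I_re, Complex.I_im, himww, -inner_self_eq_norm_sq_to_K]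
  have h4 : (D k a : ℝ) = -(inner ℂ a (w k) : ℂ).re := by
    rw [hD k a ha, hηk]
    simp [inner_sub_right, inner_neg_right, inner_smul_right, Complex.sub_im, Complex.neg_im,
      Complex.mul_im, Complex.I_re, Complex.I_im, himam]
  have h5 : (D k b : ℝ) = -(inner ℂ b (w k) : ℂ).re := by
    rw [hD k b hb, hηk]
    simp [inner_sub_right, inner_neg_right, inner_smul_right, Complex.sub_im, Complex.neg_im,
      Complex.mul_im, Complex.I_re, Complex.I_im, himbm]
  have hDr : (D k (r k) : ℝ) = D k a + D k (z k) := by rw [hrk, map_add]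
  rw [hDr, h1, h2, h3, h4, h5]
  rw [show ∀ (c A B lamk : ℂ), Complex.exp c * (lamk * Complex.exp A * Complex.exp B)
      = lamk * Complex.exp (c + A + B) from fun c A B lamk => by
    rw [Complex.exp_add, Complex.exp_add]; ring]
  congr 1
  push_cast
  ring
end

section
/- Let H be a complex Hilbert space, L ⊆ H a closed Lagrangian real-linear subspace, η₀ ∈ H, and D : H → ℝ a continuous real-linear functional with D(ξ) = 2·ω(ξ,η₀) for all ξ ∈ L. Fix τ ∈ H and write τ = a + J b with a, b ∈ L. Then the function f : ℝ → ℂ defined by f(λ) := ρ^{λ·D, λ·η₀}(τ) (the quantization of the Weyl observable exp(i·λ·D) evaluated on the coherent state of τ) is differentiable at λ = 0 with derivative f'(0) = i · ρ(τ) · ( D(a) − i·D(b) ). Equivalently, the quantization of the linear observable D, defined by ρ^D(τ) := −i·f'(0), equals ρ(τ)·( D(a) − i·D(b) ) = ρ(τ)·D̂(τ̂), where τ̂ := a − i·b. -/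
/-- quantization of a linear observable.  With `H`, `L`, `η₀`, `D` as
before, fix `τ = a + J b` with `a, b ∈ L`.  For each `λ ∈ ℝ` let `τ = r λ + J (s λ)` be
the decomposition with `r λ ∈ λ·η₀ + L`, `s λ ∈ L`, and let
`f(λ) := ρ^{λ·D, λ·η₀}(τ) = exp((i/2)·λ·D(r λ) − (i/2)·g(r λ, s λ) − (1/2)·g(s λ, s λ))`
be the quantization of the Weyl observable `exp(i·λ·D)` on the coherent state of `τ`.
Then `f` is differentiable at `0` with `f'(0) = i·ρ(τ)·(D(a) − i·D(b))`; i.e. the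
quantization of the linear observable `D` is `ρ^D(τ) = −i·f'(0) = ρ(τ)·D̂(τ̂)`. -/
theorem stmt_7
    {H : Type*} [NormedAddCommGroup H] [InnerProductSpace ℂ H] [CompleteSpace H]
    (L : Submodule ℝ H) (hClosed : IsClosed (L : Set H))
    (hLag : (L : Set H) = {x : H | ∀ ξ ∈ L, (1/2 : ℝ) * (inner ℂ x ξ : ℂ).im = 0})
    (η₀ : H) (D : H →L[ℝ] ℝ)
    (hD : ∀ ξ ∈ L, D ξ = 2 * ((1/2 : ℝ) * (inner ℂ ξ η₀ : ℂ).im))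
    (τ a b : H) (ha : a ∈ L) (hb : b ∈ L) (hab : τ = a + Complex.I • b)
    (r s : ℝ → H)
    (hr : ∀ lam : ℝ, ∃ l ∈ L, r lam = lam • η₀ + l) (hs : ∀ lam : ℝ, s lam ∈ L)
    (hτdec : ∀ lam : ℝ, τ = r lam + Complex.I • s lam)
    (f : ℝ → ℂ)
    (hf : ∀ lam : ℝ, f lam =
      Complex.exp ((Complex.I / 2) * ((lam * D (r lam) : ℝ) : ℂ)
        - (Complex.I / 2) * ((inner ℂ (r lam) (s lam) : ℂ).re : ℂ)
        - (1/2 : ℂ) * ((inner ℂ (s lam) (s lam) : ℂ).re : ℂ))) :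
    HasDerivAt f
      (Complex.I *
        Complex.exp (-(Complex.I / 2) * ((inner ℂ a b : ℂ).re : ℂ)
          - (1/2 : ℂ) * ((inner ℂ b b : ℂ).re : ℂ)) *
        ((D a : ℂ) - Complex.I * (D b : ℂ))) 0 := by
  -- Im of inner ℂ products of elements of L vanish
  have hIm : ∀ x ∈ L, ∀ ξ ∈ L, (inner ℂ x ξ : ℂ).im = 0 := by
    intro x hx ξ hξ
    have hx' : x ∈ {x : H | ∀ ξ ∈ L, (1/2 : ℝ) * (inner ℂ x ξ : ℂ).im = 0} := hLag ▸ hx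
    have := hx' ξ hξ
    linarith
  -- uniqueness of the decomposition
  have uniq : ∀ x ∈ L, ∀ y ∈ L, x + Complex.I • y = 0 → x = 0 ∧ y = 0 := by
    intro x hx y hy hxy
    have hxy' : x = -(Complex.I • y) := by
      have := hxy; rw [add_eq_zero_iff_eq_neg] at this; exact this
    have h1 : (inner ℂ x x : ℂ) = -(Complex.I * inner ℂ x y) := by
      conv_lhs => rw [show (inner ℂ x x : ℂ) = inner ℂ x (-(Complex.I • y)) by rw [← hxy']]
      rw [inner_neg_right, inner_smul_right]
    have him : (inner ℂ x y : ℂ).im = 0 := hIm x hx y hy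
    have hre : (inner ℂ x x : ℂ).re = 0 := by
      have := congrArg Complex.re h1
      simp [Complex.mul_re, him] at this
      simpa using this
    have hx0 : x = 0 := by
      have : (inner ℂ x x : ℂ) = 0 := by
        apply Complex.ext
        · simpa using hre
        · simpa using hIm x hx x hx
      exact inner_self_eq_zero.mp this
    refine ⟨hx0, ?_⟩
    have : Complex.I • y = 0 := by rw [hx0] at hxy; simpa using hxy
    have := smul_eq_zero.mp this
    rcases this with h | h
    · exact absurd h Complex.I_ne_zero
    · exact h
  -- the direction vector
  set w : H := s 1 - b with hw
  have hwL : w ∈ L := L.sub_mem (hs 1) hb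
  obtain ⟨l1, hl1L, hl1⟩ := hr 1
  -- r 1 = a - I • w
  have hr1 : r 1 = a - Complex.I • w := by
    have h1 := hτdec 1
    rw [hab] at h1
    rw [hw, smul_sub]
    have : a + Complex.I • b - Complex.I • s 1 = r 1 := by
      rw [h1]; abel
    rw [← this]; abel
  have hη₀ : η₀ = a - Complex.I • w - l1 := by
    have : r 1 = (1:ℝ) • η₀ + l1 := hl1
    rw [one_smul] at this
    rw [← hr1, this]; abel
  -- D on L equals -Re⟨·,w⟩
  have hDL : ∀ ξ ∈ L, (D ξ : ℝ) = -(inner ℂ ξ w : ℂ).re := by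
    intro ξ hξ
    have h1 := hD ξ hξ
    rw [hη₀] at h1
    have expand : (inner ℂ ξ (a - Complex.I • w - l1) : ℂ)
        = inner ℂ ξ a - Complex.I * inner ℂ ξ w - inner ℂ ξ l1 := by
      rw [inner_sub_right, inner_sub_right, inner_smul_right]
    rw [h1, expand]
    have h2 : (inner ℂ ξ a : ℂ).im = 0 := hIm ξ hξ a ha
    have h3 : (inner ℂ ξ l1 : ℂ).im = 0 := hIm ξ hξ l1 hl1L
    simp [Complex.sub_im, Complex.mul_im, h2, h3]
  -- formulas for r and s
  have hkey : ∀ lam : ℝ, s lam = b + lam • w ∧ r lam = a - lam • (Complex.I • w) := by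
    intro lam
    obtain ⟨l, hlL, hl⟩ := hr lam
    have hxL : r lam - a + lam • (Complex.I • w) ∈ L := by
      have : r lam - a + lam • (Complex.I • w)
          = lam • a - lam • l1 + l - a := by
        rw [hl, hη₀]
        rw [smul_sub, smul_sub]
        abel
      rw [this]
      exact L.sub_mem (L.add_mem (L.sub_mem (L.smul_mem lam ha) (L.smul_mem lam hl1L)) hlL) ha
    have hyL : s lam - b - lam • w ∈ L :=
      L.sub_mem (L.sub_mem (hs lam) hb) (L.smul_mem lam hwL)
    have hsum : (r lam - a + lam • (Complex.I • w)) + Complex.I • (s lam - b - lam • w) = 0 := by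
      have h1 := hτdec lam
      rw [hab] at h1
      have hrl : r lam = a + Complex.I • b - Complex.I • s lam := by
        rw [h1]; abel
      rw [hrl, smul_comm lam Complex.I w]
      simp only [smul_sub]
      abel
    obtain ⟨hx0, hy0⟩ := uniq _ hxL _ hyL hsum
    constructor
    · have h' : s lam - (b + lam • w) = 0 := by rw [← hy0]; abel
      exact sub_eq_zero.mp h'
    · have h' : r lam - (a - lam • (Complex.I • w)) = 0 := by rw [← hx0]; abel
      exact sub_eq_zero.mp h'
  have hsb : ∀ lam : ℝ, s lam = b + lam • w := fun lam => (hkey lam).1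
  have hrb : ∀ lam : ℝ, r lam = a - lam • (Complex.I • w) := fun lam => (hkey lam).2
  -- helper lemmas for inner ℂ products with real scalars
  have innsl : ∀ (t : ℝ) (x y : H), (inner ℂ (t • x) y : ℂ) = (t : ℂ) * inner ℂ x y := by
    intro t x y
    rw [RCLike.real_smul_eq_coe_smul (K := ℂ), inner_smul_left]
    simp
  have innsr : ∀ (t : ℝ) (x y : H), (inner ℂ x (t • y) : ℂ) = (t : ℂ) * inner ℂ x y := by
    intro t x y
    rw [RCLike.real_smul_eq_coe_smul (K := ℂ), inner_smul_right]
    norm_cast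
  have hIl : ∀ y : H, (inner ℂ (Complex.I • w) y : ℂ) = -Complex.I * inner ℂ w y := by
    intro y
    rw [inner_smul_left]
    simp [Complex.conj_I]
  -- abbreviations
  set A := (inner ℂ a b : ℂ).re with hA
  set B := (inner ℂ b b : ℂ).re with hB
  set P := (inner ℂ a w : ℂ).re with hP
  set Q := (inner ℂ b w : ℂ).re with hQ
  set R := (inner ℂ w w : ℂ).re with hR
  set E := D (Complex.I • w) with hE
  have hDa : (D a : ℝ) = -P := hDL a ha
  have hDb : (D b : ℝ) = -Q := hDL b hb
  have hDr : ∀ lam : ℝ, D (r lam) = D a - lam * E := by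
    intro lam
    rw [hrb lam, map_sub, map_smul]
    simp [smul_eq_mul]
    exact Or.inl hE.symm
  have hQ' : (inner ℂ w b : ℂ).re = Q := by
    rw [hQ, ← inner_conj_symm b w, Complex.conj_re]
  have hre_rs : ∀ lam : ℝ, (inner ℂ (r lam) (s lam) : ℂ).re = A + lam * P := by
    intro lam
    rw [hrb lam, hsb lam]
    simp only [inner_sub_left, inner_add_right, innsl, innsr, hIl]
    have h1 := hIm w hwL b hb
    have h2 := hIm w hwL w hwL
    have h3 := hIm a ha b hb
    simp [Complex.sub_re, Complex.add_re, Complex.mul_re, Complex.mul_im, h1, h2, h3]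
    simp only [← Complex.ofReal_pow, Complex.ofReal_im]
    simp [hA, hP]
  have hre_ss : ∀ lam : ℝ, (inner ℂ (s lam) (s lam) : ℂ).re
      = B + 2 * lam * Q + lam ^ 2 * R := by
    intro lam
    rw [hsb lam]
    simp only [inner_add_left, inner_add_right, innsl, innsr]
    have h2 := hIm w hwL w hwL
    simp [Complex.add_re, Complex.mul_re, Complex.mul_im, h2, hQ']
    have eb : B = ‖b‖ ^ 2 := by rw [hB]; exact @inner_self_eq_norm_sq ℂ _ _ _ _ b
    have er : R = ‖w‖ ^ 2 := by rw [hR]; exact @inner_self_eq_norm_sq ℂ _ _ _ _ w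
    simp only [← Complex.ofReal_pow, Complex.ofReal_re]
    rw [← hQ, eb, er]
    ring
  -- the cubic-free polynomial form of f
  set c₀ : ℂ := -(Complex.I / 2) * (A : ℂ) - (1/2 : ℂ) * (B : ℂ) with hc₀
  set c₁ : ℂ := (Complex.I / 2) * ((D a : ℝ) : ℂ) - (Complex.I / 2) * (P : ℂ) - (Q : ℂ) with hc₁
  set c₂ : ℂ := -(Complex.I / 2) * (E : ℂ) - (1/2 : ℂ) * (R : ℂ) with hc₂
  have hfe : f = fun lam : ℝ => Complex.exp (c₀ + c₁ * (lam : ℂ) + c₂ * ((lam : ℂ) * (lam : ℂ))) := by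
    funext lam
    rw [hf lam, hDr lam, hre_rs lam, hre_ss lam, hc₀, hc₁, hc₂]
    congr 1
    push_cast
    ring
  have hid : HasDerivAt (fun x : ℝ => (x : ℂ)) 1 0 := Complex.ofRealCLM.hasDerivAt
  have hG : HasDerivAt (fun lam : ℝ => c₀ + c₁ * (lam : ℂ) + c₂ * ((lam : ℂ) * (lam : ℂ))) c₁ 0 := by
    have h1 := hid.const_mul c₁
    have h2 := (hid.mul hid).const_mul c₂
    have h3 := (h1.add h2).const_add c₀
    have e1 : (fun x : ℝ => c₀ + (c₁ * (x : ℂ) + c₂ * ((x : ℂ) * (x : ℂ))))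
        = (fun lam : ℝ => c₀ + c₁ * (lam : ℂ) + c₂ * ((lam : ℂ) * (lam : ℂ))) := by
      funext x; ring
    simp only [Pi.add_apply, Pi.mul_apply] at h3
    rw [e1] at h3
    convert h3 using 1
    push_cast
    rfl
    simp
  have hfinal := hG.cexp
  rw [hfe]
  convert hfinal using 1
  rw [hc₀, hc₁]
  rw [hDa, hDb]
  push_cast
  ring_nf
  rw [Complex.I_sq]
  ring
end

section
/- Let H be a complex Hilbert space and L ⊆ H a closed Lagrangian real-linear subspace. Let D₁, D₂ : H → ℝ be continuous real-linear functionals and η₁, η₂ ∈ J L points with D_k(ξ) = 2·ω(ξ,η_k) for all ξ ∈ L (k = 1, 2). Fix τ ∈ H and write τ = a + J b with a, b ∈ L, and set D̂_k(τ̂) := D_k(a) − i·D_k(b). Then the function G : ℝ² → ℂ defined by G(λ₁,λ₂) := ρ^{λ₁·D₁ + λ₂·D₂, λ₁·η₁ + λ₂·η₂}(τ) has a mixed second partial derivative at (0,0) satisfying − ∂²G/∂λ₁∂λ₂ (0,0) = ρ(τ) · ( D̂₁(τ̂)·D̂₂(τ̂) − (i/2)·D₁(η₂) − (i/2)·D₂(η₁)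 + g(η₁,η₂) ). (This is the coherent-state matrix element of the Feynman quantization of the quadratic observable D₁·D₂.) -/
/-- quantization of a quadratic observable `D₁·D₂`.
Let `H` be a complex Hilbert space, `L ⊆ H` a closed Lagrangian real-linear subspace.
Let `D₁, D₂ : H → ℝ` be continuous real-linear functionals and `η₁, η₂ ∈ J L` with
`D_k(ξ) = 2·ω(ξ,η_k)` for all `ξ ∈ L`.  Fix `τ = a + J b` with `a, b ∈ L`.  For every
`(λ₁,λ₂)` let `τ = r λ₁ λ₂ + J (s λ₁ λ₂)` be the decomposition with
`r λ₁ λ₂ ∈ (λ₁·η₁ + λ₂·η₂) + L`, `s λ₁ λ₂ ∈ L`, and let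
`G(λ₁,λ₂) := ρ^{λ₁·D₁+λ₂·D₂, λ₁·η₁+λ₂·η₂}(τ)`.  Then `G` has a mixed second partial
derivative at `(0,0)` with
`−∂²G/∂λ₁∂λ₂(0,0) = ρ(τ)·(D̂₁(τ̂)·D̂₂(τ̂) − (i/2)·D₁(η₂) − (i/2)·D₂(η₁) + g(η₁,η₂))`,
where `D̂_k(τ̂) = D_k(a) − i·D_k(b)`. -/
theorem stmt_8
    {H : Type*} [NormedAddCommGroup H] [InnerProductSpace ℂ H] [CompleteSpace H]
    (L : Submodule ℝ H) (hClosed : IsClosed (L : Set H))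
    (hLag : (L : Set H) = {x : H | ∀ ξ ∈ L, (1/2 : ℝ) * (inner ℂ x ξ : ℂ).im = 0})
    (D₁ D₂ : H →L[ℝ] ℝ) (η₁ η₂ : H)
    (hη₁ : ∃ x ∈ L, η₁ = Complex.I • x) (hη₂ : ∃ x ∈ L, η₂ = Complex.I • x)
    (hD₁ : ∀ ξ ∈ L, D₁ ξ = 2 * ((1/2 : ℝ) * (inner ℂ ξ η₁ : ℂ).im))
    (hD₂ : ∀ ξ ∈ L, D₂ ξ = 2 * ((1/2 : ℝ) * (inner ℂ ξ η₂ : ℂ).im))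
    (τ a b : H) (ha : a ∈ L) (hb : b ∈ L) (hab : τ = a + Complex.I • b)
    (r s : ℝ → ℝ → H)
    (hr : ∀ l1 l2 : ℝ, ∃ l ∈ L, r l1 l2 = (l1 • η₁ + l2 • η₂) + l)
    (hs : ∀ l1 l2 : ℝ, s l1 l2 ∈ L)
    (hτdec : ∀ l1 l2 : ℝ, τ = r l1 l2 + Complex.I • s l1 l2)
    (G : ℝ → ℝ → ℂ)
    (hG : ∀ l1 l2 : ℝ, G l1 l2 =
      Complex.exp ((Complex.I / 2) * ((l1 * D₁ (r l1 l2) + l2 * D₂ (r l1 l2) : ℝ) : ℂ)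
        - (Complex.I / 2) * ((inner ℂ (r l1 l2) (s l1 l2) : ℂ).re : ℂ)
        - (1/2 : ℂ) * ((inner ℂ (s l1 l2) (s l1 l2) : ℂ).re : ℂ))) :
    ∃ c : ℂ,
      (∀ l1 : ℝ, DifferentiableAt ℝ (fun l2 => G l1 l2) 0) ∧
      HasDerivAt (fun l1 => deriv (fun l2 => G l1 l2) 0) c 0 ∧
      -c = Complex.exp (-(Complex.I / 2) * ((inner ℂ a b : ℂ).re : ℂ)
            - (1/2 : ℂ) * ((inner ℂ b b : ℂ).re : ℂ)) *
          (((D₁ a : ℂ) - Complex.I * (D₁ b : ℂ)) * ((D₂ a : ℂ) - Complex.I * (D₂ b : ℂ))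
            - (Complex.I / 2) * (D₁ η₂ : ℂ)
            - (Complex.I / 2) * (D₂ η₁ : ℂ)
            + ((inner ℂ η₁ η₂ : ℂ).re : ℂ)) := by
  obtain ⟨x₁, hx₁, hη₁e⟩ := hη₁
  obtain ⟨x₂, hx₂, hη₂e⟩ := hη₂
  subst hη₁e hη₂e hab
  -- The imaginary parts of inner products of elements of `L` vanish (Lagrangian).
  have hIm : ∀ u ∈ L, ∀ w ∈ L, (inner ℂ u w : ℂ).im = 0 := by
    intro u hu w hw
    have h : u ∈ {x : H | ∀ ξ ∈ L, (1/2 : ℝ) * (inner ℂ x ξ : ℂ).im = 0} := hLag ▸ hu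
    have := h w hw; linarith
  -- `D_k ξ = Re⟪ξ, x_k⟫` on `L`.
  have hD1' : ∀ ξ ∈ L, (D₁ ξ : ℝ) = (inner ℂ ξ x₁ : ℂ).re := by
    intro ξ hξ
    rw [hD₁ ξ hξ, inner_smul_right]
    simp [Complex.mul_im]
  have hD2' : ∀ ξ ∈ L, (D₂ ξ : ℝ) = (inner ℂ ξ x₂ : ℂ).re := by
    intro ξ hξ
    rw [hD₂ ξ hξ, inner_smul_right]
    simp [Complex.mul_im]
  -- Re-symmetry of the inner product.
  have hsymm : ∀ u w : H, (inner ℂ u w : ℂ).re = (inner ℂ w u : ℂ).re := by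
    intro u w
    rw [← inner_conj_symm u w, Complex.conj_re]
  -- uniqueness of the decomposition `L ⊕ J L`
  have huniq : ∀ u ∈ L, ∀ v ∈ L, u + Complex.I • v = 0 → v = 0 ∧ u = 0 := by
    intro u hu v hv h
    have him := hIm u hu v hv
    have hu' : u = -(Complex.I • v) := by linear_combination (norm := module) h
    rw [hu', inner_neg_left, inner_smul_left] at him
    simp [Complex.mul_im] at him
    have hn : ‖v‖^2 = 0 := by
      have h2 := inner_self_eq_norm_sq (𝕜 := ℂ) v
      simp only [RCLike.re_to_complex] at h2
      rw [← h2]; simpa using him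
    have hv0 : v = 0 := norm_eq_zero.mp (by nlinarith [norm_nonneg v])
    exact ⟨hv0, by simp [hu', hv0]⟩
  -- explicit formulas for `r` and `s`
  have hrs : ∀ l1 l2 : ℝ,
      r l1 l2 = a + l1 • (Complex.I • x₁) + l2 • (Complex.I • x₂) ∧
      s l1 l2 = b - l1 • x₁ - l2 • x₂ := by
    intro l1 l2
    obtain ⟨l, hl, hre⟩ := hr l1 l2
    have h1 := hτdec l1 l2
    rw [hre] at h1
    have key : (a - l) + Complex.I • (b - (l1 • x₁ + l2 • x₂ + s l1 l2)) = 0 := by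
      linear_combination (norm := module) h1
    have hmem1 : a - l ∈ L := sub_mem ha hl
    have hmem2 : b - (l1 • x₁ + l2 • x₂ + s l1 l2) ∈ L :=
      sub_mem hb (add_mem (add_mem (L.smul_mem l1 hx₁) (L.smul_mem l2 hx₂)) (hs l1 l2))
    obtain ⟨hv0, hu0⟩ := huniq _ hmem1 _ hmem2 key
    have hla : l = a := by linear_combination (norm := module) -hu0
    constructor
    · rw [hre, hla]; module
    · linear_combination (norm := module) -hv0
  -- name the coefficients of the quadratic exponent
  set k0 : ℂ := -(Complex.I / 2) * ((inner ℂ a b : ℂ).re : ℂ)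
      - (1/2 : ℂ) * ((inner ℂ b b : ℂ).re : ℂ) with hk0
  set k1 : ℂ := Complex.I * (D₁ a : ℂ) + (D₁ b : ℂ) with hk1
  set k2 : ℂ := Complex.I * (D₂ a : ℂ) + (D₂ b : ℂ) with hk2
  set k11 : ℂ := (Complex.I / 2) * (D₁ (Complex.I • x₁) : ℂ)
      - (1/2 : ℂ) * ((inner ℂ x₁ x₁ : ℂ).re : ℂ) with hk11
  set k12 : ℂ := (Complex.I / 2) * ((D₁ (Complex.I • x₂) : ℂ) + (D₂ (Complex.I • x₁) : ℂ))
      - ((inner ℂ x₁ x₂ : ℂ).re : ℂ) with hk12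
  set k22 : ℂ := (Complex.I / 2) * (D₂ (Complex.I • x₂) : ℂ)
      - (1/2 : ℂ) * ((inner ℂ x₂ x₂ : ℂ).re : ℂ) with hk22
  -- the closed formula for `G`
  have hG' : ∀ l1 l2 : ℝ, G l1 l2 =
      Complex.exp (k0 + k1*l1 + k2*l2 + k11*l1^2 + k12*(l1*l2) + k22*l2^2) := by
    intro l1 l2
    obtain ⟨hr', hs'⟩ := hrs l1 l2
    rw [hG l1 l2, hr', hs']
    congr 1
    have hgrs : (inner ℂ (a + l1 • (Complex.I • x₁) + l2 • (Complex.I • x₂))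
        (b - l1 • x₁ - l2 • x₂) : ℂ).re
        = (inner ℂ a b : ℂ).re - l1 * (inner ℂ a x₁ : ℂ).re - l2 * (inner ℂ a x₂ : ℂ).re := by
      simp only [inner_add_left, inner_sub_right, ← Complex.coe_smul, inner_smul_left,
        inner_smul_right, Complex.conj_ofReal, Complex.conj_I, Complex.add_re, Complex.sub_re,
        Complex.mul_re, Complex.neg_re, Complex.neg_im, Complex.I_re, Complex.I_im,
        Complex.ofReal_re, Complex.ofReal_im, hIm x₁ hx₁ b hb, hIm x₂ hx₂ b hb,
        hIm x₁ hx₁ x₁ hx₁, hIm x₁ hx₁ x₂ hx₂, hIm x₂ hx₂ x₁ hx₁, hIm x₂ hx₂ x₂ hx₂]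
      ring
    have hgss : (inner ℂ (b - l1 • x₁ - l2 • x₂) (b - l1 • x₁ - l2 • x₂) : ℂ).re
        = (inner ℂ b b : ℂ).re - 2*l1 * (inner ℂ b x₁ : ℂ).re - 2*l2 * (inner ℂ b x₂ : ℂ).re
          + l1^2 * (inner ℂ x₁ x₁ : ℂ).re + 2*(l1*l2) * (inner ℂ x₁ x₂ : ℂ).re
          + l2^2 * (inner ℂ x₂ x₂ : ℂ).re := by
      simp only [inner_sub_left, inner_sub_right, ← Complex.coe_smul, inner_smul_left,
        inner_smul_right, Complex.conj_ofReal, Complex.sub_re, Complex.mul_re,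
        Complex.ofReal_re, Complex.ofReal_im, hsymm x₁ b, hsymm x₂ b, hsymm x₂ x₁]
      ring
    have hDr1 : D₁ (a + l1 • (Complex.I • x₁) + l2 • (Complex.I • x₂))
        = D₁ a + l1 * D₁ (Complex.I • x₁) + l2 * D₁ (Complex.I • x₂) := by
      simp [map_add, map_smul, smul_eq_mul]
    have hDr2 : D₂ (a + l1 • (Complex.I • x₁) + l2 • (Complex.I • x₂))
        = D₂ a + l1 * D₂ (Complex.I • x₁) + l2 * D₂ (Complex.I • x₂) := by
      simp [map_add, map_smul, smul_eq_mul]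
    rw [hDr1, hDr2, hgrs, hgss, ← hD1' a ha, ← hD2' a ha, ← hD1' b hb, ← hD2' b hb,
      hk0, hk1, hk2, hk11, hk12, hk22]
    push_cast
    ring
  -- generic derivative lemma
  have hgen : ∀ (A B C : ℂ) (t : ℝ), HasDerivAt (fun l : ℝ => Complex.exp (A + B*l + C*l^2))
      (Complex.exp (A + B*t + C*t^2) * (B + C*(2*t))) t := by
    intro A B C t
    have hpoly : HasDerivAt (fun z : ℂ => A + B*z + C*z^2) (B + C*(2*(t:ℂ))) (t:ℂ) := by
      have h1 : HasDerivAt (fun z : ℂ => A + B*z) B (t:ℂ) := by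
        simpa using ((hasDerivAt_id (t:ℂ)).const_mul B).const_add A
      have h2 : HasDerivAt (fun z : ℂ => C*z^2) (C*(2*(t:ℂ))) (t:ℂ) := by
        simpa using (hasDerivAt_pow 2 (t:ℂ)).const_mul C
      exact h1.add h2
    simpa using (hpoly.cexp).comp_ofReal
  -- inner derivative
  have hin : ∀ l1 : ℝ, HasDerivAt (fun l2 => G l1 l2)
      (Complex.exp (k0 + k1*l1 + k11*l1^2) * (k2 + k12*l1)) 0 := by
    intro l1
    have hfun : (fun l2 => G l1 l2)
        = fun l2 : ℝ => Complex.exp ((k0 + k1*l1 + k11*l1^2) + (k2 + k12*l1)*l2 + k22*l2^2) := by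
      funext l2
      rw [hG' l1 l2]
      congr 1
      ring
    rw [hfun]
    simpa using hgen (k0 + k1*l1 + k11*l1^2) (k2 + k12*l1) k22 0
  have houter : (fun l1 : ℝ => deriv (fun l2 => G l1 l2) 0)
      = fun l1 : ℝ => Complex.exp (k0 + k1*l1 + k11*l1^2) * (k2 + k12*l1) :=
    funext fun l1 => (hin l1).deriv
  refine ⟨Complex.exp k0 * k1 * k2 + Complex.exp k0 * k12,
    fun l1 => (hin l1).differentiableAt, ?_, ?_⟩
  · rw [houter]
    have hout : HasDerivAt
        (fun z : ℂ => Complex.exp (k0 + k1*z + k11*z^2) * (k2 + k12*z))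
        (Complex.exp (k0 + k1*0 + k11*0^2) * (k1 + k11*(2*0)) * (k2 + k12*0)
          + Complex.exp (k0 + k1*0 + k11*0^2) * k12) (0:ℂ) := by
      have hpoly : HasDerivAt (fun z : ℂ => k0 + k1*z + k11*z^2) (k1 + k11*(2*(0:ℂ))) 0 := by
        have h1 : HasDerivAt (fun z : ℂ => k0 + k1*z) k1 (0:ℂ) := by
          simpa using ((hasDerivAt_id (0:ℂ)).const_mul k1).const_add k0
        have h2 : HasDerivAt (fun z : ℂ => k11*z^2) (k11*(2*(0:ℂ))) (0:ℂ) := by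
          simpa using (hasDerivAt_pow 2 (0:ℂ)).const_mul k11
        exact h1.add h2
      have hlin : HasDerivAt (fun z : ℂ => k2 + k12*z) k12 (0:ℂ) := by
        simpa using ((hasDerivAt_id (0:ℂ)).const_mul k12).const_add k2
      exact (hpoly.cexp).mul hlin
    have h2 := hout.comp_ofReal (z := 0)
    norm_num at h2 ⊢
    convert h2 using 2
  · have hg12 : (inner ℂ (Complex.I • x₁) (Complex.I • x₂) : ℂ) = inner ℂ x₁ x₂ := by
      rw [inner_smul_left, inner_smul_right, Complex.conj_I]
      ring_nf
      simp [Complex.I_sq]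
    rw [hg12, hk1, hk2, hk12]
    linear_combination (-(Complex.exp k0) * ((D₁ a : ℂ)*(D₂ a : ℂ)
      + (D₁ b : ℂ)*(D₂ b : ℂ))) * Complex.I_sq
end
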